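/- For every positive definite n×n real matrix A, log det(A) = inf { tr(AB) − n − log det(B) : B a positive definite n×n real matrix }, and the infimum is attained at B = A⁻¹. -/

import Mathlib

open Matrix

private lemma trace_eq_sum_eigs {n : ℕ} {M : Matrix (Fin n) (Fin n) ℝ}
    (hM : M.IsHermitian) : M.trace = ∑ i, hM.eigenvalues i := by
  simpa using hM.trace_eq_sum_eigenvalues

private lemma log_det_le {n : ℕ} {M : Matrix (Fin n) (Fin n) ℝ}
    (hM : M.PosDef) : Real.log M.det ≤ M.trace - n := by
  have hev := hM.eigenvalues_pos
  have hdet : M.det = ∏ i, hM.isHermitian.eigenvalues i := by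
    simpa using hM.isHermitian.det_eq_prod_eigenvalues
  rw [hdet, Real.log_prod (fun i _ => (hev i).ne'),
    trace_eq_sum_eigs hM.isHermitian]
  have h : ∀ i ∈ Finset.univ, Real.log (hM.isHermitian.eigenvalues i) ≤
      hM.isHermitian.eigenvalues i - 1 :=
    fun i _ => Real.log_le_sub_one_of_pos (hev i)
  calc ∑ i, Real.log (hM.isHermitian.eigenvalues i)
      ≤ ∑ i : Fin n, (hM.isHermitian.eigenvalues i - 1) := Finset.sum_le_sum h
    _ = (∑ i, hM.isHermitian.eigenvalues i) - n := by
        rw [Finset.sum_sub_distrib]; simp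

open scoped MatrixOrder in
theorem log_det_variational
    (n : ℕ) (A : Matrix (Fin n) (Fin n) ℝ) (hA : A.PosDef) :
    IsLeast {r : ℝ | ∃ B : Matrix (Fin n) (Fin n) ℝ, B.PosDef ∧
        r = (A * B).trace - (n : ℝ) - Real.log B.det}
      (Real.log A.det) ∧
    Real.log A.det = (A * A⁻¹).trace - (n : ℝ) - Real.log (A⁻¹).det := by
  have hAdet : 0 < A.det := hA.det_pos
  have hAinv : (A⁻¹).PosDef := hA.inv
  have hAunit : IsUnit A.det := isUnit_iff_ne_zero.mpr hAdet.ne'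
  have hmul : A * A⁻¹ = 1 := mul_nonsing_inv A hAunit
  have hinvdet : (A⁻¹).det = A.det⁻¹ := by
    rw [det_nonsing_inv, Ring.inverse_eq_inv']
  have key : Real.log A.det = (A * A⁻¹).trace - (n : ℝ) - Real.log (A⁻¹).det := by
    rw [hmul, trace_one, hinvdet, Real.log_inv]
    simp
  refine ⟨⟨⟨A⁻¹, hAinv, key⟩, ?_⟩, key⟩
  rintro r ⟨B, hB, rfl⟩
  have hS := (CFC.sqrt_nonneg A).posSemidef
  have hsq : CFC.sqrt A * CFC.sqrt A = A := CFC.sqrt_mul_sqrt_self A hA.posSemidef.nonneg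
  set S := CFC.sqrt A with hSdef
  have hSdet : S.det * S.det = A.det := by rw [← det_mul, hsq]
  have hSd : S.det ≠ 0 := by
    intro h; rw [h, mul_zero] at hSdet; exact hAdet.ne' hSdet.symm
  have hSH : Sᴴ = S := hS.isHermitian
  have hM : (S * B * S).PosDef := by
    refine Matrix.PosDef.of_dotProduct_mulVec_pos ?_ ?_
    · have := (hB.posSemidef.mul_mul_conjTranspose_same S).isHermitian
      rwa [hSH] at this
    · intro x hx
      have hSx : S *ᵥ x ≠ 0 := by
        intro h
        have : S⁻¹ *ᵥ (S *ᵥ x) = x := by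
          rw [mulVec_mulVec, nonsing_inv_mul S (isUnit_iff_ne_zero.mpr hSd), one_mulVec]
        rw [h, mulVec_zero] at this
        exact hx this.symm
      have := hB.dotProduct_mulVec_pos hSx
      have heq : star x ⬝ᵥ (S * B * S) *ᵥ x
          = star (S *ᵥ x) ⬝ᵥ B *ᵥ (S *ᵥ x) := by
        conv_lhs => rw [show S * B * S = Sᴴ * B * S by rw [hSH]]
        rw [star_mulVec, dotProduct_mulVec, dotProduct_mulVec, vecMul_vecMul,
          dotProduct_mulVec, vecMul_vecMul]
      rw [heq]
      exact this
  have hle := log_det_le hM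
  have htr : (S * B * S).trace = (A * B).trace := by
    rw [trace_mul_cycle, hsq]
  have hdet : (S * B * S).det = A.det * B.det := by
    rw [det_mul, det_mul, mul_comm S.det B.det, mul_assoc, hSdet, mul_comm]
  rw [htr, hdet, Real.log_mul hAdet.ne' hB.det_pos.ne'] at hle
  linarith
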